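/- Let p be the {0,1}-valued array of size (2,2,2) with p_{1,1,1}=p_{2,2,1}=p_{1,2,2}=p_{2,1,2}=1 and p_{1,2,1}=p_{2,1,1}=p_{1,1,2}=p_{2,2,2}=0. Then there exists a nonnegative real array x of size (2,2,2) with all 1-marginals equal to 1 and x ≤ p entrywise (namely the array with value 1/2 at each position where p is 1 and 0 elsewhere, and this is the unique such real array), but there exists no nonnegative integer array with these properties. -/
import Mathlib


/-- `p` has ones exactly at (1,1,1),(2,2,1),(1,2,2),(2,1,2) (1-based), i.e. at
triples with even coordinate sum. -/
def vlachBound : Fin 2 → Fin 2 → Fin 2 → ℕ :=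
  fun i j k => if (i.1 + j.1 + k.1) % 2 = 0 then 1 else 0

/-- There is a (unique) nonnegative real (2,2,2)-array with all 1-marginals 1
dominated by `vlachBound` (the half-array), but no nonnegative integer one. -/
theorem real_feasible_integer_infeasible :
    (∃! x : Fin 2 → Fin 2 → Fin 2 → ℝ,
      (∀ i j k, 0 ≤ x i j k) ∧
      (∀ i j k, x i j k ≤ (vlachBound i j k : ℝ)) ∧
      (∀ i, ∑ j, ∑ k, x i j k = 1) ∧
      (∀ j, ∑ i, ∑ k, x i j k = 1) ∧
      (∀ k, ∑ i, ∑ j, x i j k = 1)) ∧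
    ((fun i j k => (vlachBound i j k : ℝ) / 2) =
      fun i j k : Fin 2 => if (i.1 + j.1 + k.1) % 2 = 0 then (1 : ℝ) / 2 else 0) ∧
    ((∀ i j k, (0:ℝ) ≤ (vlachBound i j k : ℝ) / 2) ∧
      (∀ i j k, (vlachBound i j k : ℝ) / 2 ≤ (vlachBound i j k : ℝ)) ∧
      (∀ i, ∑ j, ∑ k, (vlachBound i j k : ℝ) / 2 = 1) ∧
      (∀ j, ∑ i, ∑ k, (vlachBound i j k : ℝ) / 2 = 1) ∧
      (∀ k, ∑ i, ∑ j, (vlachBound i j k : ℝ) / 2 = 1)) ∧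
    ¬ (∃ z : Fin 2 → Fin 2 → Fin 2 → ℕ,
      (∀ i j k, z i j k ≤ vlachBound i j k) ∧
      (∀ i, ∑ j, ∑ k, z i j k = 1) ∧
      (∀ j, ∑ i, ∑ k, z i j k = 1) ∧
      (∀ k, ∑ i, ∑ j, z i j k = 1)) := by
  refine ⟨⟨fun i j k => (vlachBound i j k : ℝ) / 2, ?_, ?_⟩, ?_, ?_, ?_⟩
  · refine ⟨fun i j k => ?_, fun i j k => ?_, fun i => ?_, fun j => ?_, fun k => ?_⟩
    · positivity
    · have : (0:ℝ) ≤ (vlachBound i j k : ℝ) := Nat.cast_nonneg _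
      linarith
    · fin_cases i <;> simp [Fin.sum_univ_two, vlachBound] <;> norm_num
    · fin_cases j <;> simp [Fin.sum_univ_two, vlachBound] <;> norm_num
    · fin_cases k <;> simp [Fin.sum_univ_two, vlachBound] <;> norm_num
  · rintro y ⟨hpos, hle, h1, h2, h3⟩
    have z000 := hle 0 1 0
    have z100 := hle 1 0 0
    have z001 := hle 0 0 1
    have z111 := hle 1 1 1
    have p000 := hpos 0 1 0
    have p100 := hpos 1 0 0
    have p001 := hpos 0 0 1
    have p111 := hpos 1 1 1
    simp [vlachBound] at z000 z100 z001 z111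
    have e0 := h1 0; have e1 := h1 1
    have f0 := h2 0; have f1 := h2 1
    have g0 := h3 0; have g1 := h3 1
    simp [Fin.sum_univ_two] at e0 e1 f0 f1 g0 g1
    funext i j k
    fin_cases i <;> fin_cases j <;> fin_cases k <;>
      simp [vlachBound] <;> linarith
  · funext i j k
    simp [vlachBound]
    split <;> norm_num
  · refine ⟨fun i j k => ?_, fun i j k => ?_, fun i => ?_, fun j => ?_, fun k => ?_⟩
    · positivity
    · have : (0:ℝ) ≤ (vlachBound i j k : ℝ) := Nat.cast_nonneg _
      linarith
    · fin_cases i <;> simp [Fin.sum_univ_two, vlachBound] <;> norm_num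
    · fin_cases j <;> simp [Fin.sum_univ_two, vlachBound] <;> norm_num
    · fin_cases k <;> simp [Fin.sum_univ_two, vlachBound] <;> norm_num
  · rintro ⟨z, hle, h1, h2, h3⟩
    have z000 := hle 0 1 0
    have z100 := hle 1 0 0
    have z001 := hle 0 0 1
    have z111 := hle 1 1 1
    simp [vlachBound] at z000 z100 z001 z111
    have e0 := h1 0; have e1 := h1 1
    have f0 := h2 0
    have g0 := h3 0; have g1 := h3 1
    simp [Fin.sum_univ_two] at e0 e1 f0 g0 g1
    omega
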